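/- In the two-Normal model setting with equal prior odds and g₀ < g₁, if sqrt(g₁/g₀) > 1 then for every fixed z there exists N such that Pr(M₀|data) > Pr(M₁|data) for all n ≥ N; i.e., model M₀ is asymptotically favored regardless of the (fixed) value of z. -/

import Mathlib

open Filter Topology

/-- Two-Normal setting with equal prior odds and `g₀ < g₁`: if `√(g₁/g₀) > 1` then
for every fixed `z` there is `N` with `Pr(M₀|data) > Pr(M₁|data)` for all `n ≥ N`,
where `Pr(M₁|data) = (1 + BF₀₁)⁻¹` and `Pr(M₀|data) = 1 − Pr(M₁|data)`. -/
theorem stmt_16 (g0 g1 : ℝ) (hg0 : 0 < g0) (hg01 : g0 < g1)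
    (hroot : 1 < Real.sqrt (g1 / g0)) :
    ∀ z : ℝ, ∃ N : ℕ, ∀ n ≥ N,
      (1 - (1 + Real.sqrt ((1 + n * g1) / (1 + n * g0)) *
          Real.exp ((g0 - g1) * n * z ^ 2 / (2 * (1 + n * g0) * (1 + n * g1))))⁻¹) >
      (1 + Real.sqrt ((1 + n * g1) / (1 + n * g0)) *
          Real.exp ((g0 - g1) * n * z ^ 2 / (2 * (1 + n * g0) * (1 + n * g1))))⁻¹ := by
  intro z
  have hg1 : 0 < g1 := hg0.trans hg01
  -- limit of the ratio inside the sqrt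
  have hr : Tendsto (fun n : ℕ => (1 + (n : ℝ) * g1) / (1 + n * g0)) atTop (𝓝 (g1 / g0)) := by
    have h1 : Tendsto (fun n : ℕ => 1 / (n : ℝ) + g1) atTop (𝓝 (0 + g1)) :=
      tendsto_one_div_atTop_nhds_zero_nat.add tendsto_const_nhds
    have h0 : Tendsto (fun n : ℕ => 1 / (n : ℝ) + g0) atTop (𝓝 (0 + g0)) :=
      tendsto_one_div_atTop_nhds_zero_nat.add tendsto_const_nhds
    have hdiv := h1.div h0 (by simpa using hg0.ne')
    rw [zero_add, zero_add] at hdiv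
    refine hdiv.congr' ?_
    filter_upwards [eventually_ge_atTop 1] with n hn
    have hnp : (0 : ℝ) < n := by exact_mod_cast hn
    simp only [Pi.div_apply]
    field_simp
  -- exponent tends to 0
  have he : Tendsto (fun n : ℕ =>
      (g0 - g1) * n * z ^ 2 / (2 * (1 + n * g0) * (1 + n * g1))) atTop (𝓝 0) := by
    have h1 : Tendsto (fun n : ℕ => (g0 - g1) * z ^ 2 / (n : ℝ)) atTop (𝓝 0) := by
      simpa [div_eq_mul_inv] using tendsto_one_div_atTop_nhds_zero_nat.const_mul ((g0 - g1) * z ^ 2)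
    have h0a : Tendsto (fun n : ℕ => 1 / (n : ℝ) + g0) atTop (𝓝 (0 + g0)) :=
      tendsto_one_div_atTop_nhds_zero_nat.add tendsto_const_nhds
    have h0b : Tendsto (fun n : ℕ => 1 / (n : ℝ) + g1) atTop (𝓝 (0 + g1)) :=
      tendsto_one_div_atTop_nhds_zero_nat.add tendsto_const_nhds
    have hden : Tendsto (fun n : ℕ => 2 * (1 / (n : ℝ) + g0) * (1 / n + g1)) atTop
        (𝓝 (2 * (0 + g0) * (0 + g1))) := (h0a.const_mul 2).mul h0b
    have hdiv := h1.div hden (by positivity)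
    rw [zero_div] at hdiv
    refine hdiv.congr' ?_
    filter_upwards [eventually_ge_atTop 1] with n hn
    have hnp : (0 : ℝ) < n := by exact_mod_cast hn
    simp only [Pi.div_apply]
    field_simp
  -- BF tends to sqrt(g1/g0)
  have hlim : Tendsto (fun n : ℕ => Real.sqrt ((1 + (n : ℝ) * g1) / (1 + n * g0)) *
      Real.exp ((g0 - g1) * n * z ^ 2 / (2 * (1 + n * g0) * (1 + n * g1)))) atTop
      (𝓝 (Real.sqrt (g1 / g0))) := by
    have h1 := (Real.continuous_sqrt.tendsto _).comp hr
    have h2 := (Real.continuous_exp.tendsto _).comp he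
    have := h1.mul h2
    simpa using this
  have hev : ∀ᶠ n : ℕ in atTop, 1 < Real.sqrt ((1 + (n : ℝ) * g1) / (1 + n * g0)) *
      Real.exp ((g0 - g1) * n * z ^ 2 / (2 * (1 + n * g0) * (1 + n * g1))) :=
    hlim.eventually (eventually_gt_nhds hroot)
  rw [eventually_atTop] at hev
  obtain ⟨N, hN⟩ := hev
  refine ⟨N, fun n hn => ?_⟩
  have hb := hN n hn
  set b := Real.sqrt ((1 + (n : ℝ) * g1) / (1 + n * g0)) *
      Real.exp ((g0 - g1) * n * z ^ 2 / (2 * (1 + n * g0) * (1 + n * g1))) with hbdef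
  have h2 : (2 : ℝ) < 1 + b := by linarith
  have hinv : (1 + b)⁻¹ < 2⁻¹ := by
    apply inv_strictAnti₀ (by norm_num) h2
  rw [show (2:ℝ)⁻¹ = 1/2 by norm_num] at hinv
  linarith
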